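/- With the setup of the previous statement (𝓣 ⊆ 𝒫(X) with smallest sets B_𝓣(x,y), and the induced ultrametric u), the precise ultrametric ball B(x,y) = {z ∈ X : u(x,z) ≤ u(x,y)} equals B_𝓣(x,y) for all distinct x, y ∈ X. -/
import Mathlib

/-- With the induced ultrametric `u` coming from a family `𝓣` with smallest sets
`B_𝓣(x,y)`, the precise ball `B(x,y) = {z : u x z ⊆ u x y}` equals `B_𝓣(x,y) = u x y`
for all distinct `x, y`. -/
theorem precise_ball_eq_smallest_set {X : Type*} (T : Set (Set X)) (u : X → X → Set X)
    (hdiag : ∀ x, u x x = ∅)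
    (hu : ∀ x y : X, x ≠ y →
      u x y ∈ T ∧ x ∈ u x y ∧ y ∈ u x y ∧ ∀ S ∈ T, x ∈ S → y ∈ S → u x y ⊆ S) :
    ∀ x y : X, x ≠ y → {z | u x z ⊆ u x y} = u x y := by
  intro x y hxy
  obtain ⟨hT, hx, hy, _⟩ := hu x y hxy
  ext z
  simp only [Set.mem_setOf_eq]
  constructor
  · intro h
    by_cases hzx : z = x
    · subst hzx; exact hx
    · exact h (hu x z (Ne.symm hzx)).2.2.1
  · intro hz
    by_cases hzx : z = x
    · subst hzx; rw [hdiag]; exact Set.empty_subset _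
    · exact (hu x z (Ne.symm hzx)).2.2.2 _ hT hx hz
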